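/- Let P : Fin p → Fin q → MvPolynomial (Fin n) ℝ be a matrix of multivariate polynomials, and for w ∈ (Fin n → ℝ) let F(w) be the real p-by-q matrix with entries (F(w))_{ij} = eval w (P i j). Let r* be the maximum of rank F(w) over all w ∈ (Fin n → ℝ). Then the set {w : rank F(w) < r*} has Lebesgue measure zero; in other words, rank F(w) = r* for almost every w with respect to Lebesgue measure on Fin n → ℝ. -/

import Mathlib

open MeasureTheory

/-- The zero set of a nonzero multivariate polynomial over ℝ has Lebesgue measure zero. -/
lemma mvpoly_zero_set_null : ∀ (n : ℕ) (f : MvPolynomial (Fin n) ℝ), f ≠ 0 →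
    volume {w : Fin n → ℝ | MvPolynomial.eval w f = 0} = 0 := by
  intro n
  induction n with
  | zero =>
    intro f hf
    obtain ⟨a, rfl⟩ := MvPolynomial.C_surjective (Fin 0) f
    have ha : a ≠ 0 := fun h => hf (by rw [h, map_zero])
    have : {w : Fin 0 → ℝ | MvPolynomial.eval w (MvPolynomial.C a) = 0} = ∅ := by
      ext w; simp [ha]
    rw [this, measure_empty]
  | succ n ih =>
    intro f hf
    set g : Polynomial (MvPolynomial (Fin n) ℝ) := MvPolynomial.finSuccEquiv ℝ n f with hgdef
    have hg : g ≠ 0 := by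
      intro h
      exact hf ((map_eq_zero_iff _ (AlgEquiv.injective _)).mp h)
    have hc : g.leadingCoeff ≠ 0 := Polynomial.leadingCoeff_ne_zero.mpr hg
    set F : ℝ × (Fin n → ℝ) → ℝ := fun x =>
      ∑ i ∈ Finset.range (g.natDegree + 1),
        MvPolynomial.eval x.2 (g.coeff i) * x.1 ^ i with hFdef
    have hFcont : Continuous F := by
      apply continuous_finset_sum
      intro i _
      exact ((MvPolynomial.continuous_eval (p := g.coeff i)).comp continuous_snd).mul
        ((continuous_pow i).comp continuous_fst)
    have hFval : ∀ (y : ℝ) (s : Fin n → ℝ),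
        F (y, s) = Polynomial.eval y (g.map (MvPolynomial.eval s)) := by
      intro y s
      rw [Polynomial.eval_map, Polynomial.eval₂_eq_sum_range]
    set T : Set ((Fin n → ℝ) × ℝ) := (F ∘ Prod.swap) ⁻¹' {0} with hTdef
    have hTmeas : MeasurableSet T :=
      (hFcont.comp continuous_swap).measurable (measurableSet_singleton 0)
    have hT : ((volume : Measure (Fin n → ℝ)).prod (volume : Measure ℝ)) T = 0 := by
      rw [MeasureTheory.Measure.measure_prod_null hTmeas]
      have hae : ∀ᵐ s : Fin n → ℝ, MvPolynomial.eval s g.leadingCoeff ≠ 0 := by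
        rw [ae_iff]
        simpa using ih g.leadingCoeff hc
      filter_upwards [hae] with s hs
      have hps : g.map (MvPolynomial.eval s) ≠ 0 := by
        intro h
        apply hs
        have h2 : (g.map (MvPolynomial.eval s)).coeff g.natDegree = 0 := by
          rw [h, Polynomial.coeff_zero]
        rw [Polynomial.coeff_map] at h2
        exact h2
      have hslice : (Prod.mk s ⁻¹' T) = {y : ℝ | (g.map (MvPolynomial.eval s)).IsRoot y} := by
        ext y
        simp [T, hFval, Polynomial.IsRoot]
      simp only [Pi.zero_apply]
      rw [hslice]
      exact Set.Finite.measure_zero (Polynomial.finite_setOf_isRoot hps) volume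
    have hmp := MeasureTheory.volume_preserving_piFinSuccAbove (fun _ : Fin (n+1) => ℝ) 0
    set e := MeasurableEquiv.piFinSuccAbove (fun _ : Fin (n+1) => ℝ) 0 with hedef
    have hset : {w : Fin (n+1) → ℝ | MvPolynomial.eval w f = 0}
        = e ⁻¹' (Prod.swap ⁻¹' T) := by
      ext x
      simp only [Set.mem_setOf_eq, Set.mem_preimage, hTdef, Function.comp_apply,
        Prod.swap_swap, Set.mem_singleton_iff]
      have hex : e x = (x 0, Fin.tail x) := by
        simp [hedef, MeasurableEquiv.piFinSuccAbove, Fin.removeNth_zero]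
      rw [hex]
      rw [hFval, ← MvPolynomial.eval_eq_eval_mv_eval', Fin.cons_self_tail]
    calc volume {w : Fin (n+1) → ℝ | MvPolynomial.eval w f = 0}
        = volume (e ⁻¹' (Prod.swap ⁻¹' T)) := by rw [hset]
      _ = volume (Prod.swap ⁻¹' T) :=
          hmp.measure_preimage ((measurable_swap hTmeas).nullMeasurableSet)
      _ = ((volume : Measure (Fin n → ℝ)).prod (volume : Measure ℝ)) T := by
          rw [MeasureTheory.Measure.volume_eq_prod, ← Measure.prod_swap,
            Measure.map_apply measurable_swap (measurable_swap hTmeas)]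
          simp [Set.preimage_preimage]
      _ = 0 := hT
open MeasureTheory Module Submodule Matrix

/-- From a finite family spanning a space of finrank `r`, extract `r` linearly
independent members. -/
lemma exists_linearIndependent_comp {K V : Type*} [Field K] [AddCommGroup V] [Module K V]
    {ι : Type*} [Fintype ι] (v : ι → V) (r : ℕ)
    (h : finrank K (span K (Set.range v)) = r) :
    ∃ g : Fin r → ι, LinearIndependent K (v ∘ g) := by
  obtain ⟨b, hbsub, hbspan, hbind⟩ := exists_linearIndependent K (Set.range v)
  have hbfin : b.Finite := (Set.finite_range v).subset hbsub
  haveI := hbfin.fintype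
  have hcard : Fintype.card b = r := by
    rw [← Set.toFinset_card, ← finrank_span_set_eq_card hbind, hbspan, h]
  let e : Fin r ≃ b := (Fintype.equivFinOfCardEq hcard).symm
  choose φ hφ using fun x : b => hbsub x.2
  refine ⟨fun j => φ (e j), ?_⟩
  have : v ∘ (fun j => φ (e j)) = (fun x : b => (x : V)) ∘ e := by
    funext j
    simp [Function.comp, hφ]
  rw [this]
  exact hbind.comp e e.injective

lemma rank_submatrix_le'' {p q r : ℕ} (A : Matrix (Fin p) (Fin q) ℝ)
    (f : Fin r → Fin p) (g : Fin r → Fin q) :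
    (A.submatrix f g).rank ≤ A.rank := by
  have h1 : ((1 : Matrix (Fin p) (Fin p) ℝ).submatrix f (Equiv.refl (Fin p))) * A
      = A.submatrix f id := by
    rw [Matrix.one_submatrix_mul]
    rfl
  have h2 : (A.submatrix f id) * ((1 : Matrix (Fin q) (Fin q) ℝ).submatrix (Equiv.refl (Fin q)) g)
      = A.submatrix f g := by
    rw [Matrix.mul_submatrix_one]
    simp
  calc (A.submatrix f g).rank
      = ((A.submatrix f id) * ((1 : Matrix (Fin q) (Fin q) ℝ).submatrix (Equiv.refl (Fin q)) g)).rank := by rw [h2]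
    _ ≤ (A.submatrix f id).rank := Matrix.rank_mul_le_left _ _
    _ = (((1 : Matrix (Fin p) (Fin p) ℝ).submatrix f (Equiv.refl (Fin p))) * A).rank := by rw [h1]
    _ ≤ A.rank := Matrix.rank_mul_le_right _ _

lemma le_rank_of_submatrix_det_ne_zero {p q r : ℕ} (A : Matrix (Fin p) (Fin q) ℝ)
    (f : Fin r → Fin p) (g : Fin r → Fin q) (h : (A.submatrix f g).det ≠ 0) :
    r ≤ A.rank := by
  have hu : IsUnit (A.submatrix f g) :=
    (Matrix.isUnit_iff_isUnit_det _).mpr (isUnit_iff_ne_zero.mpr h)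
  have := Matrix.rank_of_isUnit _ hu
  rw [Fintype.card_fin] at this
  exact this ▸ rank_submatrix_le'' A f g

/-- A matrix of rank `r` has a nonzero `r × r` minor. -/
lemma exists_nonzero_minor {p q : ℕ} (A : Matrix (Fin p) (Fin q) ℝ) :
    ∃ f : Fin A.rank → Fin p, ∃ g : Fin A.rank → Fin q,
      (A.submatrix f g).det ≠ 0 := by
  obtain ⟨g, hg⟩ := exists_linearIndependent_comp (fun j : Fin q => Aᵀ j) A.rank
    (by exact (Matrix.rank_eq_finrank_span_cols A).symm)
  set B := A.submatrix (id : Fin p → Fin p) g with hB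
  have hBT : Bᵀ = fun j => Aᵀ (g j) := by
    funext j i
    rfl
  have hBrank : B.rank = A.rank := by
    rw [Matrix.rank_eq_finrank_span_cols, show B.col = fun j => Aᵀ (g j) from hBT]
    exact finrank_span_eq_card hg ▸ (by rw [Fintype.card_fin])
  obtain ⟨f, hf⟩ := exists_linearIndependent_comp (fun i : Fin p => B i) A.rank
    (by
      have h2 : Bᵀ.rank = finrank ℝ (span ℝ (Set.range fun i => B i)) := by
        rw [Matrix.rank_eq_finrank_span_cols, Matrix.col_def, Matrix.transpose_transpose]
      rw [← h2, Matrix.rank_transpose, hBrank])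
  refine ⟨f, g, ?_⟩
  have hC : A.submatrix f g = B.submatrix f (id : Fin A.rank → Fin A.rank) := by
    rw [hB, Matrix.submatrix_submatrix]
    rfl
  have hrows : LinearIndependent ℝ (fun i => (A.submatrix f g) i) := by
    rw [hC]
    exact hf
  have hu : IsUnit (A.submatrix f g) := Matrix.linearIndependent_rows_iff_isUnit.mp hrows
  exact ((Matrix.isUnit_iff_isUnit_det _).mp hu).ne_zero

theorem stmt3 (n p q : ℕ) (P : Fin p → Fin q → MvPolynomial (Fin n) ℝ)
    (rstar : ℕ)
    (hmax : IsGreatest {ρ : ℕ | ∃ w : Fin n → ℝ,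
        (Matrix.of fun i j => MvPolynomial.eval w (P i j)).rank = ρ} rstar) :
    volume {w : Fin n → ℝ |
        (Matrix.of fun i j => MvPolynomial.eval w (P i j)).rank < rstar} = 0 := by
  obtain ⟨⟨w0, hw0⟩, -⟩ := hmax
  obtain ⟨f, g, hdet⟩ :=
    exists_nonzero_minor (Matrix.of fun i j => MvPolynomial.eval w0 (P i j))
  -- the polynomial minor
  set D : MvPolynomial (Fin n) ℝ :=
    (Matrix.of fun i j => P (f i) (g j)).det with hD
  have heval : ∀ w : Fin n → ℝ, MvPolynomial.eval w D =
      ((Matrix.of fun i j => MvPolynomial.eval w (P i j)).submatrix f g).det := by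
    intro w
    rw [hD, RingHom.map_det]
    congr 1
  have hDne : D ≠ 0 := by
    intro h
    apply hdet
    have := heval w0
    rw [h, map_zero] at this
    rw [← this]
  have hsub : {w : Fin n → ℝ |
        (Matrix.of fun i j => MvPolynomial.eval w (P i j)).rank < rstar}
      ⊆ {w : Fin n → ℝ | MvPolynomial.eval w D = 0} := by
    intro w hw
    by_contra hne
    have := le_rank_of_submatrix_det_ne_zero
      (Matrix.of fun i j => MvPolynomial.eval w (P i j)) f g
      (by rw [← heval w]; exact hne)
    rw [hw0] at this
    exact absurd hw (not_lt.mpr this)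
  exact measure_mono_null hsub (mvpoly_zero_set_null n D hDne)
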